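/- Every generator of the ideal I annihilates F under the contraction action, so that I ⊆ Ann(F); moreover no nonzero linear form of S annihilates F, and consequently the graded quotient S/Ann(F) has Hilbert function (1,n,n,1) (dim_k (S/Ann(F))_i equals 1, n, n, 1 for i = 0,1,2,3 and 0 otherwise). -/

import Mathlib

open MvPolynomial

variable {K : Type*} [Field K] {σ : Type*}

noncomputable def contract (s f : MvPolynomial σ K) : MvPolynomial σ K :=
  Finsupp.sum (AddMonoidAlgebra.coeff s) fun b cb => cb • f.divMonomial b

lemma contract_monomial (b : σ →₀ ℕ) (c : K) (f : MvPolynomial σ K) :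
    contract (monomial b c) f = c • f.divMonomial b := by
  unfold contract
  rw [← single_eq_monomial, AddMonoidAlgebra.coeff_single]
  exact Finsupp.sum_single_index (by simp)

lemma contract_add_left (s t f : MvPolynomial σ K) :
    contract (s + t) f = contract s f + contract t f := by
  unfold contract
  rw [AddMonoidAlgebra.coeff_add]
  exact Finsupp.sum_add_index' (fun b => by simp) (fun b c c' => add_smul _ _ _)

lemma contract_zero_left (f : MvPolynomial σ K) : contract 0 f = 0 :=
  Finsupp.sum_zero_index

lemma contract_zero_right (s : MvPolynomial σ K) : contract s (0 : MvPolynomial σ K) = 0 := by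
  unfold contract
  simp

lemma smul_divMonomial (c : K) (f : MvPolynomial σ K) (b : σ →₀ ℕ) :
    (c • f).divMonomial b = c • f.divMonomial b := by
  ext a
  simp [coeff_divMonomial, MvPolynomial.coeff_smul]

lemma contract_add_right (s f g : MvPolynomial σ K) :
    contract s (f + g) = contract s f + contract s g := by
  unfold contract
  rw [← Finsupp.sum_add]
  exact Finsupp.sum_congr fun b _ => by rw [add_divMonomial, smul_add]

lemma contract_mul (s t f : MvPolynomial σ K) :
    contract (s * t) f = contract s (contract t f) := by
  induction s using MvPolynomial.induction_on' with
  | add p q hp hq => rw [add_mul, contract_add_left, contract_add_left, hp, hq]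
  | monomial a c =>
    induction t using MvPolynomial.induction_on' with
    | add p q hp hq =>
      rw [mul_add, contract_add_left, contract_add_left p q, contract_add_right, hp, hq]
    | monomial b d =>
      rw [monomial_mul, contract_monomial, contract_monomial, contract_monomial,
        smul_divMonomial, mul_smul, ← divMonomial_add, add_comm a b]

/-- The apolar (annihilator) ideal of `f` under contraction. -/
noncomputable def annIdeal (f : MvPolynomial σ K) : Ideal (MvPolynomial σ K) where
  carrier := {s | contract s f = 0}
  zero_mem' := contract_zero_left f
  add_mem' := fun hs ht => by
    simp only [Set.mem_setOf_eq] at *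
    rw [contract_add_left, hs, ht, add_zero]
  smul_mem' := fun c x hx => by
    simp only [Set.mem_setOf_eq] at *
    rw [smul_eq_mul, contract_mul, hx, contract_zero_right]

/-- The dimension of the degree-`i` graded piece of `S/I`. -/
noncomputable def hilbQ (I : Ideal (MvPolynomial σ K)) (i : ℕ) : ℕ :=
  Module.finrank K
    (↥(homogeneousSubmodule σ K i) ⧸
      ((I.restrictScalars K).comap (homogeneousSubmodule σ K i).subtype))

/-- `Apolar f` has Hilbert function `(1,n,n,1)` and `S/(Ann f)²` has the smallest
possible Hilbert function in degrees 4 and 5. -/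
noncomputable def SmallTangentSpace (n : ℕ) (f : MvPolynomial σ K) : Prop :=
  hilbQ (annIdeal f) 0 = 1 ∧ hilbQ (annIdeal f) 1 = n ∧ hilbQ (annIdeal f) 2 = n ∧
    hilbQ (annIdeal f) 3 = 1 ∧ (∀ i : ℕ, 3 < i → hilbQ (annIdeal f) i = 0) ∧
    hilbQ ((annIdeal f) ^ 2) 4 = n ∧ hilbQ ((annIdeal f) ^ 2) 5 = 0

variable (K : Type*) [Field K]

/-- The variable `x_i` (with `x ∈ {a,b,c}` encoded as `Fin 3`). -/
noncomputable def V (m : ℕ) (x : Fin 3) (i : ZMod m) : MvPolynomial (Fin 3 × ZMod m) K :=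
  MvPolynomial.X (x, i)

/-- The generators of the ideal `I`. -/
noncomputable def IabcGens (m : ℕ) : Set (MvPolynomial (Fin 3 × ZMod m) K) :=
  {p | ∃ (x y : Fin 3) (i j : ZMod m),
      j ≠ i - 1 ∧ j ≠ i ∧ j ≠ i + 1 ∧ p = V K m x i * V K m y j} ∪
  {p | ∃ (x y : Fin 3) (i j : ZMod m), x ≠ y ∧
      p = V K m x i * V K m y (i + 1) - V K m x j * V K m y (j + 1)} ∪
  {p | ∃ (x y z : Fin 3) (i : ZMod m), x ≠ y ∧ x ≠ z ∧ y ≠ z ∧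
      p = V K m x i ^ 2 - V K m y (i - 1) * V K m z (i - 1)} ∪
  {p | ∃ (x y z : Fin 3) (i : ZMod m), x ≠ y ∧ x ≠ z ∧ y ≠ z ∧
      p = V K m x i * V K m y i - V K m z (i - 1) * V K m z i}

/-- The ideal `I`. -/
noncomputable def Iabc (m : ℕ) : Ideal (MvPolynomial (Fin 3 × ZMod m) K) :=
  Ideal.span (IabcGens K m)

/-- The ideal `J = I² + (a_i a_{i+1} a_{i+2}², b_i b_{i+1} b_{i+2}², c_i c_{i+1} c_{i+2}²)`. -/
noncomputable def Jabc (m : ℕ) : Ideal (MvPolynomial (Fin 3 × ZMod m) K) :=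
  Iabc K m ^ 2 ⊔
    Ideal.span {p | ∃ (x : Fin 3) (i : ZMod m),
      p = V K m x i * V K m x (i + 1) * V K m x (i + 2) ^ 2}

/-- The cubic `F = Σ a_i b_i c_i + a_i a_{i+1}^[2] + b_i b_{i+1}^[2] + c_i c_{i+1}^[2]`
in the divided power module (basis element `x^[e]` is represented by `monomial e 1`). -/
noncomputable def Fcubic (m : ℕ) : MvPolynomial (Fin 3 × ZMod m) K :=
  ∑ i ∈ Finset.range m,
    (monomial (Finsupp.single ((0 : Fin 3), (i : ZMod m)) 1 +
        Finsupp.single ((1 : Fin 3), (i : ZMod m)) 1 +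
        Finsupp.single ((2 : Fin 3), (i : ZMod m)) 1) (1 : K) +
      monomial (Finsupp.single ((0 : Fin 3), (i : ZMod m)) 1 +
        Finsupp.single ((0 : Fin 3), ((i + 1 : ℕ) : ZMod m)) 2) (1 : K) +
      monomial (Finsupp.single ((1 : Fin 3), (i : ZMod m)) 1 +
        Finsupp.single ((1 : Fin 3), ((i + 1 : ℕ) : ZMod m)) 2) (1 : K) +
      monomial (Finsupp.single ((2 : Fin 3), (i : ZMod m)) 1 +
        Finsupp.single ((2 : Fin 3), ((i + 1 : ℕ) : ZMod m)) 2) (1 : K))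


/-! ### Auxiliary development -/

section Dev

open Finsupp

variable {K : Type*} [Field K] {σ : Type*}

lemma coeff_contract (s f : MvPolynomial σ K) (a : σ →₀ ℕ) :
    coeff a (contract s f) = (AddMonoidAlgebra.coeff s).sum fun b cb => cb * coeff (b + a) f := by
  unfold contract
  rw [Finsupp.sum, Finsupp.sum, MvPolynomial.coeff_sum]
  refine Finset.sum_congr rfl fun b _ => ?_
  rw [MvPolynomial.coeff_smul, coeff_divMonomial]
  rfl

lemma contract_C (c : K) (f : MvPolynomial σ K) : contract (C c) f = c • f := by
  rw [C_apply, contract_monomial, divMonomial_zero]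

lemma contract_smul (c : K) (s f : MvPolynomial σ K) :
    contract (c • s) f = c • contract s f := by
  rw [smul_eq_C_mul, contract_mul, contract_C]

lemma contract_sub (s t f : MvPolynomial σ K) :
    contract (s - t) f = contract s f - contract t f := by
  have h := contract_add_left (s - t) t f
  rw [sub_add_cancel] at h
  exact eq_sub_of_add_eq h.symm

lemma mem_annIdeal_iff {f s : MvPolynomial σ K} :
    s ∈ annIdeal f ↔ contract s f = 0 := Iff.rfl

/-- Contraction by a fixed polynomial, as a linear map. -/
noncomputable def contrF (f : MvPolynomial σ K) :
    MvPolynomial σ K →ₗ[K] MvPolynomial σ K where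
  toFun s := contract s f
  map_add' s t := contract_add_left s t f
  map_smul' c s := by simp only [RingHom.id_apply]; exact contract_smul c s f

@[simp] lemma contrF_apply (f s : MvPolynomial σ K) : contrF f s = contract s f := rfl

lemma degree_single' (u : σ) (n : ℕ) : (Finsupp.single u n).degree = n := by
  classical
  by_cases h : n = 0
  · simp [h, Finsupp.degree]
  · rw [Finsupp.degree_apply, Finsupp.support_single_ne_zero _ h, Finset.sum_singleton,
      Finsupp.single_eq_same]

lemma degree_add' (a b : σ →₀ ℕ) : (a + b).degree = a.degree + b.degree := by
  simp only [Finsupp.degree_eq_weight_one]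
  exact map_add _ a b

lemma isHomog_of (p : MvPolynomial σ K) (n : ℕ)
    (h : ∀ d, coeff d p ≠ 0 → d.degree = n) : p.IsHomogeneous n := by
  intro d hd
  rw [show (weight 1 : (σ →₀ ℕ) →+ ℕ) = weight (fun _ => 1) from rfl,
    ← Finsupp.degree_eq_weight_one]
  exact h d hd

lemma IsHomog.degree_eq {p : MvPolynomial σ K} {n : ℕ} (hp : p.IsHomogeneous n)
    {d : σ →₀ ℕ} (hd : coeff d p ≠ 0) : d.degree = n := by
  by_contra h
  exact hd (hp.coeff_eq_zero h)

lemma single_of_degree_one {e : σ →₀ ℕ} (he : e.degree = 1) : ∃ u, e = Finsupp.single u 1 := by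
  classical
  have hne : e ≠ 0 := by
    intro h; rw [h, map_zero] at he; exact one_ne_zero he.symm
  obtain ⟨u, hu⟩ := Finsupp.ne_iff.mp hne
  rw [Finsupp.zero_apply] at hu
  have hu1 : 1 ≤ e u := Nat.one_le_iff_ne_zero.mpr hu
  have husup : u ∈ e.support := Finsupp.mem_support_iff.mpr hu
  refine ⟨u, ?_⟩
  have heu : e u = 1 := le_antisymm (he ▸ Finsupp.le_degree u e) hu1
  ext v
  rcases eq_or_ne v u with rfl | hvu
  · simp [heu, Finsupp.single_eq_same]
  · rw [Finsupp.single_apply, if_neg (by exact fun h => hvu h.symm)]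
    by_contra hv
    have hvsup : v ∈ e.support := Finsupp.mem_support_iff.mpr hv
    have hsub : ({u, v} : Finset σ) ⊆ e.support := by
      intro w hw
      rcases Finset.mem_insert.mp hw with rfl | hw
      · exact husup
      · rw [Finset.mem_singleton] at hw; subst hw; exact hvsup
    have h2 : 2 ≤ e.degree := by
      have := Finset.sum_le_sum_of_subset hsub (f := e)
      rw [Finset.sum_pair (by exact fun h => hvu h.symm) (f := e)] at this
      calc 2 = 1 + 1 := rfl
        _ ≤ e u + e v := Nat.add_le_add hu1 (Nat.one_le_iff_ne_zero.mpr hv)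
        _ ≤ e.degree := this
    omega

lemma eq_C_of_homog0 {p : MvPolynomial σ K} (hp : p.IsHomogeneous 0) :
    p = C (coeff 0 p) := by
  classical
  ext e
  rcases eq_or_ne e 0 with rfl | he
  · simp
  · rw [hp.coeff_eq_zero (by rwa [Ne, Finsupp.degree_eq_zero_iff]), coeff_C,
      if_neg (by exact fun h => he h.symm)]

lemma X_mul_X (u v : σ) :
    (X u : MvPolynomial σ K) * X v =
      monomial (Finsupp.single u 1 + Finsupp.single v 1) 1 := by
  rw [X, X, monomial_mul, one_mul]

lemma X_sq (u : σ) :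
    (X u : MvPolynomial σ K) ^ 2 = monomial (Finsupp.single u 2) 1 := by
  rw [sq, X_mul_X, ← Finsupp.single_add]

lemma contract_homog {s f : MvPolynomial σ K} {d n : ℕ}
    (hs : s.IsHomogeneous d) (hf : f.IsHomogeneous n) :
    (contract s f).IsHomogeneous (n - d) := by
  apply isHomog_of
  intro e he
  rw [coeff_contract] at he
  obtain ⟨b, hb, hb0⟩ := Finset.exists_ne_zero_of_sum_ne_zero he
  have hcb : coeff b s ≠ 0 := MvPolynomial.mem_support_iff.mp hb
  have hf0 : coeff (b + e) f ≠ 0 := fun h => hb0 (by show coeff b s * coeff (b + e) f = 0; rw [h, mul_zero])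
  have h1 : b.degree = d := IsHomog.degree_eq hs hcb
  have h2 : (b + e).degree = n := IsHomog.degree_eq hf hf0
  rw [degree_add'] at h2
  omega

end Dev

section Comb

open Finsupp

variable {m : ℕ}

/-- Exponent of `a_j b_j c_j`. -/
noncomputable def E0 (m : ℕ) (j : ZMod m) : (Fin 3 × ZMod m) →₀ ℕ :=
  Finsupp.single ((0 : Fin 3), j) 1 + Finsupp.single ((1 : Fin 3), j) 1 +
    Finsupp.single ((2 : Fin 3), j) 1

/-- Exponent of `x_j x_{j+1}^[2]`. -/
noncomputable def EX (m : ℕ) (x : Fin 3) (j : ZMod m) : (Fin 3 × ZMod m) →₀ ℕ :=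
  Finsupp.single (x, j) 1 + Finsupp.single (x, j + 1) 2

/-- The set of exponents occurring in `F`. -/
def PF (m : ℕ) (e : (Fin 3 × ZMod m) →₀ ℕ) : Prop :=
  (∃ j, e = E0 m j) ∨ (∃ x j, e = EX m x j)

lemma E0_apply (j : ZMod m) (x : Fin 3) (k : ZMod m) :
    E0 m j (x, k) = if j = k then 1 else 0 := by
  fin_cases x <;> simp [E0, Finsupp.single_apply, Prod.ext_iff]

lemma EX_apply (x : Fin 3) (j : ZMod m) (y : Fin 3) (k : ZMod m) :
    EX m x j (y, k) = (if x = y ∧ j = k then 1 else 0) +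
      (if x = y ∧ j + 1 = k then 2 else 0) := by
  simp only [EX, Finsupp.add_apply, Finsupp.single_apply, Prod.mk.injEq]

lemma E0_degree (j : ZMod m) : (E0 m j).degree = 3 := by
  simp [E0, degree_add', degree_single']

lemma EX_degree (x : Fin 3) (j : ZMod m) : (EX m x j).degree = 3 := by
  simp [EX, degree_add', degree_single']

lemma PF_degree {e} (h : PF m e) : e.degree = 3 := by
  rcases h with ⟨j, rfl⟩ | ⟨x, j, rfl⟩
  · exact E0_degree j
  · exact EX_degree x j

section ZModFacts
variable (hm : 6 ≤ m)
include hm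

lemma zmod_one_ne (j : ZMod m) : j ≠ j + 1 := by
  haveI : NeZero m := ⟨by omega⟩
  intro h
  have h1 : (1 : ZMod m) = 0 := by
    have := h.symm
    rwa [add_eq_left] at this
  rw [show (1 : ZMod m) = ((1 : ℕ) : ZMod m) by push_cast; ring,
    ZMod.natCast_eq_zero_iff] at h1
  exact absurd (Nat.le_of_dvd one_pos h1) (by omega)

lemma zmod_two_ne (j : ZMod m) : j ≠ j + 2 := by
  haveI : NeZero m := ⟨by omega⟩
  intro h
  have h1 : (2 : ZMod m) = 0 := by
    have := h.symm
    rwa [add_eq_left] at this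
  rw [show (2 : ZMod m) = ((2 : ℕ) : ZMod m) by push_cast; ring,
    ZMod.natCast_eq_zero_iff] at h1
  exact absurd (Nat.le_of_dvd two_pos h1) (by omega)

end ZModFacts

-- Classification helpers
lemma C1 {a d : (Fin 3 × ZMod m) →₀ ℕ} {k : ZMod m} {x : Fin 3} {i : ZMod m}
    (h : a + d = E0 m k) (hd : d (x, i) ≠ 0) : k = i := by
  have hh := DFunLike.congr_fun h (x, i)
  rw [Finsupp.add_apply, E0_apply] at hh
  by_contra hik
  rw [if_neg hik] at hh
  omega

lemma C4 {a d : (Fin 3 × ZMod m) →₀ ℕ} {k : ZMod m} {x : Fin 3} {i : ZMod m}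
    (h : a + d = E0 m k) (hd : 2 ≤ d (x, i)) : False := by
  have hh := DFunLike.congr_fun h (x, i)
  rw [Finsupp.add_apply, E0_apply] at hh
  split_ifs at hh <;> omega

lemma C2 {a d : (Fin 3 × ZMod m) →₀ ℕ} {w : Fin 3} {k : ZMod m} {y : Fin 3} {j : ZMod m}
    (h : a + d = EX m w k) (hd : d (y, j) ≠ 0) : w = y ∧ (k = j ∨ k + 1 = j) := by
  have hh := DFunLike.congr_fun h (y, j)
  rw [Finsupp.add_apply, EX_apply] at hh
  split_ifs at hh with h1 h2 h2 <;>
    first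
      | exact ⟨h1.1, Or.inl h1.2⟩
      | exact ⟨h2.1, Or.inr h2.2⟩
      | omega

lemma C3 {a d : (Fin 3 × ZMod m) →₀ ℕ} {w : Fin 3} {k : ZMod m}
    {y : Fin 3} {j : ZMod m}
    (h : a + d = EX m w k) (hd : 2 ≤ d (y, j)) : w = y ∧ k + 1 = j := by
  have hh := DFunLike.congr_fun h (y, j)
  rw [Finsupp.add_apply, EX_apply] at hh
  split_ifs at hh with h1 h2 h2 <;> first | exact ⟨h2.1, h2.2⟩ | omega

lemma perm_single (x y z : Fin 3) (hxy : x ≠ y) (hxz : x ≠ z) (hyz : y ≠ z) (j : ZMod m) :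
    Finsupp.single ((x : Fin 3), j) 1 + Finsupp.single ((y : Fin 3), j) 1 +
      Finsupp.single ((z : Fin 3), j) 1 = E0 m j := by
  fin_cases x <;> fin_cases y <;> fin_cases z <;> simp_all [E0] <;> abel

end Comb

section FCoeff

open Finsupp

variable {K : Type*} [Field K] {m : ℕ}

lemma Fcubic_eq [NeZero m] (hm : 6 ≤ m) :
    Fcubic K m = ∑ j : ZMod m,
      (monomial (E0 m j) (1 : K) + monomial (EX m 0 j) 1 +
        monomial (EX m 1 j) 1 + monomial (EX m 2 j) 1) := by
  rw [Fcubic]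
  refine Finset.sum_nbij' (fun i => ((i : ℕ) : ZMod m)) (fun j => j.val) ?_ ?_ ?_ ?_ ?_
  · intro i _; exact Finset.mem_univ _
  · intro j _; exact Finset.mem_range.mpr (ZMod.val_lt j)
  · intro i hi; exact ZMod.val_natCast_of_lt (Finset.mem_range.mp hi)
  · intro j _; exact ZMod.natCast_rightInverse j
  · intro i _
    have hc : ((i + 1 : ℕ) : ZMod m) = ((i : ℕ) : ZMod m) + 1 := by push_cast; ring
    rw [hc]
    simp only [E0, EX]

lemma coeff_F_not (hm : 6 ≤ m) {e : (Fin 3 × ZMod m) →₀ ℕ} (he : ¬ PF m e) :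
    coeff e (Fcubic K m) = 0 := by
  classical
  haveI : NeZero m := ⟨by omega⟩
  rw [Fcubic_eq hm, MvPolynomial.coeff_sum]
  refine Finset.sum_eq_zero fun j _ => ?_
  simp only [coeff_add, coeff_monomial]
  rw [if_neg fun h => he (Or.inl ⟨j, h.symm⟩),
    if_neg fun h => he (Or.inr ⟨0, j, h.symm⟩),
    if_neg fun h => he (Or.inr ⟨1, j, h.symm⟩),
    if_neg fun h => he (Or.inr ⟨2, j, h.symm⟩)]
  simp

lemma E0_inj {j k : ZMod m} (h : E0 m j = E0 m k) : j = k := by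
  have hh := DFunLike.congr_fun h ((0 : Fin 3), j)
  rw [E0_apply, E0_apply, if_pos rfl] at hh
  by_contra hjk
  rw [if_neg (fun hc => hjk hc.symm)] at hh
  omega

lemma EX_ne_E0 (hm : 6 ≤ m) (x : Fin 3) (j k : ZMod m) : EX m x j ≠ E0 m k := by
  intro h
  have hh := DFunLike.congr_fun h (x, j + 1)
  rw [EX_apply, E0_apply] at hh
  have h1 : j ≠ j + 1 := zmod_one_ne hm j
  rw [if_neg (fun hc => h1 hc.2), if_pos ⟨rfl, rfl⟩] at hh
  split_ifs at hh <;> omega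

lemma EX_inj (hm : 6 ≤ m) {x y : Fin 3} {j k : ZMod m} (h : EX m x j = EX m y k) :
    x = y ∧ j = k := by
  have h1 : j ≠ j + 1 := zmod_one_ne hm j
  have hh := DFunLike.congr_fun h (x, j + 1)
  rw [EX_apply, EX_apply, if_neg (fun hc => h1 hc.2), if_pos ⟨rfl, rfl⟩] at hh
  have hxy : y = x ∧ k + 1 = j + 1 := by
    split_ifs at hh with hA hB hB
    · omega
    · omega
    · exact hB
    · omega
  obtain ⟨rfl, hk⟩ := hxy
  exact ⟨rfl, (add_right_cancel hk).symm⟩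

lemma coeff_F_mem (hm : 6 ≤ m) {e : (Fin 3 × ZMod m) →₀ ℕ} (he : PF m e) :
    coeff e (Fcubic K m) = 1 := by
  classical
  haveI : NeZero m := ⟨by omega⟩
  rw [Fcubic_eq hm, MvPolynomial.coeff_sum]
  simp only [coeff_add, coeff_monomial]
  rcases he with ⟨j0, rfl⟩ | ⟨x0, j0, rfl⟩
  · rw [Finset.sum_eq_single j0]
    · rw [if_pos rfl, if_neg (EX_ne_E0 hm _ _ _), if_neg (EX_ne_E0 hm _ _ _),
        if_neg (EX_ne_E0 hm _ _ _)]
      simp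
    · intro j _ hj
      rw [if_neg (fun h => hj (E0_inj h)), if_neg (EX_ne_E0 hm _ _ _),
        if_neg (EX_ne_E0 hm _ _ _), if_neg (EX_ne_E0 hm _ _ _)]
      simp
    · intro h; exact absurd (Finset.mem_univ j0) h
  · rw [Finset.sum_eq_single j0]
    · rw [if_neg (fun h => EX_ne_E0 hm x0 j0 j0 h.symm)]
      have key : ∀ y : Fin 3,
          (if EX m y j0 = EX m x0 j0 then (1 : K) else 0) = if y = x0 then 1 else 0 := by
        intro y
        by_cases hy : y = x0
        · subst hy; simp
        · rw [if_neg (fun h => hy (EX_inj hm h).1), if_neg hy]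
      rw [key 0, key 1, key 2, zero_add]
      fin_cases x0 <;> simp
    · intro j _ hj
      have hE : ∀ y : Fin 3, EX m y j ≠ EX m x0 j0 :=
        fun y h => hj (EX_inj hm h).2
      rw [if_neg (fun h => EX_ne_E0 hm x0 j0 j h.symm), if_neg (hE 0), if_neg (hE 1),
        if_neg (hE 2)]
      simp
    · intro h; exact absurd (Finset.mem_univ j0) h

lemma F_homog (hm : 6 ≤ m) : (Fcubic K m).IsHomogeneous 3 := by
  apply isHomog_of
  intro d hd
  by_cases h : PF m d
  · exact PF_degree h
  · exact absurd (coeff_F_not hm h) hd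

lemma F_ne_zero (hm : 6 ≤ m) : (Fcubic K m) ≠ 0 := by
  intro h
  have := coeff_F_mem (K := K) hm (e := E0 m 0) (Or.inl ⟨0, rfl⟩)
  rw [h, coeff_zero] at this
  exact one_ne_zero this.symm

end FCoeff

section Gens

open Finsupp

variable {K : Type*} [Field K] {m : ℕ}

lemma classif_sq (hm : 6 ≤ m) (x : Fin 3) (i : ZMod m) (a : (Fin 3 × ZMod m) →₀ ℕ) :
    PF m (Finsupp.single (x, i) 2 + a) ↔ a = Finsupp.single (x, i - 1) 1 := by
  have hEX : EX m x (i - 1) = Finsupp.single (x, i) 2 + Finsupp.single (x, i - 1) 1 := by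
    rw [EX, show i - 1 + 1 = i from by ring]; abel
  have hd : (Finsupp.single ((x, i) : Fin 3 × ZMod m) 2) (x, i) = 2 := Finsupp.single_eq_same
  constructor
  · rintro (⟨k, hk⟩ | ⟨w, k, hk⟩) <;> rw [add_comm] at hk
    · exact (C4 hk (by rw [hd])).elim
    · obtain ⟨rfl, hk1⟩ := C3 hk (by rw [hd])
      have hk' : k = i - 1 := eq_sub_of_add_eq hk1
      subst hk'
      rw [hEX, add_comm a] at hk
      exact add_left_cancel hk
  · rintro rfl
    exact Or.inr ⟨x, i - 1, hEX.symm⟩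

lemma classif_yz (hm : 6 ≤ m) (x y z : Fin 3) (hxy : x ≠ y) (hxz : x ≠ z) (hyz : y ≠ z)
    (i : ZMod m) (a : (Fin 3 × ZMod m) →₀ ℕ) :
    PF m ((Finsupp.single (y, i) 1 + Finsupp.single (z, i) 1) + a) ↔
      a = Finsupp.single (x, i) 1 := by
  have hE : E0 m i =
      (Finsupp.single (y, i) 1 + Finsupp.single (z, i) 1) + Finsupp.single (x, i) 1 := by
    rw [← perm_single y z x hyz (Ne.symm hxy) (Ne.symm hxz) i]
  have hdy : (Finsupp.single (y, i) 1 + Finsupp.single (z, i) 1 :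
      (Fin 3 × ZMod m) →₀ ℕ) (y, i) ≠ 0 := by
    rw [Finsupp.add_apply, Finsupp.single_eq_same]; omega
  have hdz : (Finsupp.single (y, i) 1 + Finsupp.single (z, i) 1 :
      (Fin 3 × ZMod m) →₀ ℕ) (z, i) ≠ 0 := by
    rw [Finsupp.add_apply, Finsupp.single_eq_same]; omega
  constructor
  · rintro (⟨k, hk⟩ | ⟨w, k, hk⟩) <;> rw [add_comm] at hk
    · have hki : k = i := C1 hk hdy
      subst hki
      rw [hE, add_comm a] at hk
      exact add_left_cancel hk
    · have h1 := C2 hk hdy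
      have h2 := C2 hk hdz
      exact absurd (h1.1.symm.trans h2.1) hyz
  · rintro rfl
    exact Or.inl ⟨i, hE.symm⟩

lemma classif_zz (hm : 6 ≤ m) (z : Fin 3) (i : ZMod m) (a : (Fin 3 × ZMod m) →₀ ℕ) :
    PF m ((Finsupp.single (z, i - 1) 1 + Finsupp.single (z, i) 1) + a) ↔
      a = Finsupp.single (z, i) 1 := by
  have hii : i - 1 ≠ i := by
    intro h
    have h' := congrArg (· + 1) h
    rw [show i - 1 + 1 = i from by ring] at h'
    exact zmod_one_ne hm i h'
  have hii2 : i + 1 ≠ i - 1 := by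
    intro h
    have h' := congrArg (· + 1) h
    rw [show i - 1 + 1 = i from by ring] at h'
    exact zmod_two_ne hm i (by linear_combination -h')
  have hEX : EX m z (i - 1) =
      (Finsupp.single (z, i - 1) 1 + Finsupp.single (z, i) 1) + Finsupp.single (z, i) 1 := by
    rw [EX, show i - 1 + 1 = i from by ring, show (2 : ℕ) = 1 + 1 from rfl,
      Finsupp.single_add]
    abel
  have hd1 : (Finsupp.single (z, i - 1) 1 + Finsupp.single (z, i) 1 :
      (Fin 3 × ZMod m) →₀ ℕ) (z, i - 1) ≠ 0 := by
    rw [Finsupp.add_apply, Finsupp.single_eq_same]; omega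
  have hd2 : (Finsupp.single (z, i - 1) 1 + Finsupp.single (z, i) 1 :
      (Fin 3 × ZMod m) →₀ ℕ) (z, i) ≠ 0 := by
    rw [Finsupp.add_apply, Finsupp.single_eq_same]; omega
  constructor
  · rintro (⟨k, hk⟩ | ⟨w, k, hk⟩) <;> rw [add_comm] at hk
    · have h1 : k = i - 1 := C1 hk hd1
      have h2 : k = i := C1 hk hd2
      exact absurd (h1.symm.trans h2) hii
    · have h1 := C2 hk hd1
      have h2 := C2 hk hd2
      have hk' : k = i - 1 := by
        rcases h1.2 with hA | hA <;> rcases h2.2 with hB | hB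
        · exact absurd (hA.symm.trans hB) hii
        · exact hA
        · exact absurd (by rw [hB] at hA; exact hA) hii2
        · exact absurd (hA.symm.trans hB) hii
      subst hk'
      obtain ⟨rfl, -⟩ := h1
      rw [hEX, add_comm a] at hk
      exact add_left_cancel hk
  · rintro rfl
    exact Or.inr ⟨z, i - 1, hEX.symm⟩

lemma classif_abc (hm : 6 ≤ m) (j : ZMod m) (a : (Fin 3 × ZMod m) →₀ ℕ) :
    PF m (E0 m j + a) ↔ a = 0 := by
  have hd0 : E0 m j ((0 : Fin 3), j) ≠ 0 := by rw [E0_apply, if_pos rfl]; omega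
  have hd1 : E0 m j ((1 : Fin 3), j) ≠ 0 := by rw [E0_apply, if_pos rfl]; omega
  constructor
  · rintro (⟨k, hk⟩ | ⟨w, k, hk⟩) <;> rw [add_comm] at hk
    · have hkj : k = j := C1 hk hd0
      subst hkj
      rw [show a + E0 m k = E0 m k ↔ a + E0 m k = 0 + E0 m k from by rw [zero_add]] at hk
      exact add_right_cancel hk
    · have h0 := C2 hk hd0
      have h1 := C2 hk hd1
      exact absurd (h0.1.symm.trans h1.1) (by decide)
  · rintro rfl
    rw [add_zero]
    exact Or.inl ⟨j, rfl⟩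

lemma divMon_zero (hm : 6 ≤ m) {d : (Fin 3 × ZMod m) →₀ ℕ}
    (h : ∀ a, ¬ PF m (d + a)) : (Fcubic K m).divMonomial d = 0 := by
  ext a
  rw [coeff_divMonomial, coeff_F_not hm (h a), coeff_zero]

lemma divMon_single (hm : 6 ≤ m) {d t : (Fin 3 × ZMod m) →₀ ℕ}
    (h : ∀ a, PF m (d + a) ↔ a = t) :
    (Fcubic K m).divMonomial d = monomial t (1 : K) := by
  classical
  ext a
  rw [coeff_divMonomial, coeff_monomial]
  by_cases ha : a = t
  · rw [if_pos ha.symm, coeff_F_mem hm ((h a).mpr ha)]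
  · rw [if_neg (fun hc => ha hc.symm), coeff_F_not hm (fun hc => ha ((h a).mp hc))]

lemma G1 (hm : 6 ≤ m) (x y : Fin 3) (i j : ZMod m)
    (h1 : j ≠ i - 1) (h2 : j ≠ i) (h3 : j ≠ i + 1) :
    contract (X (x, i) * X (y, j) : MvPolynomial (Fin 3 × ZMod m) K) (Fcubic K m) = 0 := by
  rw [X_mul_X, contract_monomial, one_smul, divMon_zero hm]
  intro a hPF
  have hdx : (Finsupp.single (x, i) 1 + Finsupp.single (y, j) 1 :
      (Fin 3 × ZMod m) →₀ ℕ) (x, i) ≠ 0 := by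
    rw [Finsupp.add_apply, Finsupp.single_eq_same]; omega
  have hdy : (Finsupp.single (x, i) 1 + Finsupp.single (y, j) 1 :
      (Fin 3 × ZMod m) →₀ ℕ) (y, j) ≠ 0 := by
    rw [Finsupp.add_apply, Finsupp.single_eq_same]; omega
  rcases hPF with ⟨k, hk⟩ | ⟨w, k, hk⟩ <;> rw [add_comm] at hk
  · exact h2 ((C1 hk hdy).symm.trans (C1 hk hdx))
  · have hx := C2 hk hdx
    have hy := C2 hk hdy
    rcases hx.2 with hki | hki <;> rcases hy.2 with hkj | hkj
    · exact h2 (hkj.symm.trans hki)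
    · exact h3 (by rw [← hkj, hki])
    · exact h1 (hkj.symm.trans (eq_sub_of_add_eq hki))
    · exact h2 ((by rw [← hkj, hki] : j = i))

lemma G2aux (hm : 6 ≤ m) (x y : Fin 3) (hxy : x ≠ y) (i : ZMod m) :
    contract (X (x, i) * X (y, i + 1) : MvPolynomial (Fin 3 × ZMod m) K) (Fcubic K m) = 0 := by
  rw [X_mul_X, contract_monomial, one_smul, divMon_zero hm]
  intro a hPF
  have hdx : (Finsupp.single (x, i) 1 + Finsupp.single (y, i + 1) 1 :
      (Fin 3 × ZMod m) →₀ ℕ) (x, i) ≠ 0 := by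
    rw [Finsupp.add_apply, Finsupp.single_eq_same]; omega
  have hdy : (Finsupp.single (x, i) 1 + Finsupp.single (y, i + 1) 1 :
      (Fin 3 × ZMod m) →₀ ℕ) (y, i + 1) ≠ 0 := by
    rw [Finsupp.add_apply, Finsupp.single_eq_same]; omega
  rcases hPF with ⟨k, hk⟩ | ⟨w, k, hk⟩ <;> rw [add_comm] at hk
  · have hA : k = i := C1 hk hdx
    have hB : k = i + 1 := C1 hk hdy
    exact zmod_one_ne hm i (hA.symm.trans hB)
  · have hx := C2 hk hdx
    have hy := C2 hk hdy
    exact hxy (hx.1.symm.trans hy.1)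

lemma G2 (hm : 6 ≤ m) (x y : Fin 3) (hxy : x ≠ y) (i j : ZMod m) :
    contract (X (x, i) * X (y, i + 1) - X (x, j) * X (y, j + 1) :
      MvPolynomial (Fin 3 × ZMod m) K) (Fcubic K m) = 0 := by
  rw [contract_sub, G2aux hm x y hxy i, G2aux hm x y hxy j, sub_zero]

lemma contract_XX (hm : 6 ≤ m) (x y z : Fin 3) (hxy : x ≠ y) (hxz : x ≠ z) (hyz : y ≠ z)
    (i : ZMod m) :
    contract (X (y, i) * X (z, i) : MvPolynomial (Fin 3 × ZMod m) K) (Fcubic K m) =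
      X (x, i) := by
  rw [X_mul_X, contract_monomial, one_smul,
    divMon_single hm (classif_yz hm x y z hxy hxz hyz i)]
  rfl

lemma G3 (hm : 6 ≤ m) (x y z : Fin 3) (hxy : x ≠ y) (hxz : x ≠ z) (hyz : y ≠ z) (i : ZMod m) :
    contract ((X (x, i)) ^ 2 - X (y, i - 1) * X (z, i - 1) :
      MvPolynomial (Fin 3 × ZMod m) K) (Fcubic K m) = 0 := by
  rw [contract_sub, X_sq, X_mul_X, contract_monomial, contract_monomial, one_smul, one_smul,
    divMon_single hm (classif_sq hm x i),
    divMon_single hm (classif_yz hm x y z hxy hxz hyz (i - 1)), sub_self]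

lemma G4 (hm : 6 ≤ m) (x y z : Fin 3) (hxy : x ≠ y) (hxz : x ≠ z) (hyz : y ≠ z) (i : ZMod m) :
    contract (X (x, i) * X (y, i) - X (z, i - 1) * X (z, i) :
      MvPolynomial (Fin 3 × ZMod m) K) (Fcubic K m) = 0 := by
  rw [contract_sub, X_mul_X, X_mul_X, contract_monomial, contract_monomial, one_smul, one_smul,
    divMon_single hm (classif_yz hm z x y (Ne.symm hxz) (Ne.symm hyz) hxy i),
    divMon_single hm (classif_zz hm z i), sub_self]

lemma contract_E0 (hm : 6 ≤ m) (j : ZMod m) :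
    contract (monomial (E0 m j) (1 : K)) (Fcubic K m) = 1 := by
  rw [contract_monomial, one_smul, divMon_single hm (classif_abc hm j)]
  simp

end Gens

section LinAlg

open Finsupp

variable {K : Type*} [Field K]

section Generic

variable {σ : Type*} [Fintype σ]

lemma coeff_single_sum (c : σ → K) (u0 : σ) :
    coeff (Finsupp.single u0 1) (∑ u : σ, c u • X u) = c u0 := by
  classical
  rw [MvPolynomial.coeff_sum]
  have step : ∀ u : σ, coeff (Finsupp.single u0 1) (c u • X u) = if u = u0 then c u else 0 := by
    intro u
    rw [MvPolynomial.coeff_smul, coeff_X']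
    by_cases h : u = u0
    · subst h; rw [if_pos rfl, if_pos rfl, smul_eq_mul, mul_one]
    · rw [if_neg (fun hc => h ((Finsupp.single_left_inj one_ne_zero).mp hc)), if_neg h,
        smul_zero]
  rw [Finset.sum_congr rfl (fun u _ => step u), Finset.sum_ite_eq' Finset.univ u0 c]
  simp

lemma homog1_rep {p : MvPolynomial σ K} (hp : p.IsHomogeneous 1) :
    p = ∑ u : σ, coeff (Finsupp.single u 1) p • X u := by
  classical
  ext e
  by_cases he : ∃ u, e = Finsupp.single u 1
  · obtain ⟨u, rfl⟩ := he
    rw [coeff_single_sum]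
  · have h0 : coeff e p = 0 := by
      by_contra h
      exact he (single_of_degree_one (IsHomog.degree_eq hp h))
    rw [h0, MvPolynomial.coeff_sum]
    symm
    refine Finset.sum_eq_zero fun u _ => ?_
    rw [MvPolynomial.coeff_smul, coeff_X', if_neg (fun hc => he ⟨u, hc.symm⟩), smul_zero]

/-- Coordinates of a homogeneous degree-one polynomial. -/
noncomputable def homog1Coord : homogeneousSubmodule σ K 1 →ₗ[K] (σ → K) where
  toFun p u := coeff (Finsupp.single u 1) (p : MvPolynomial σ K)
  map_add' p q := by funext u; simp
  map_smul' c p := by funext u; simp [MvPolynomial.coeff_smul]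

lemma homog1Coord_bij :
    Function.Bijective (homog1Coord (K := K) (σ := σ)) := by
  constructor
  · intro p q hpq
    apply Subtype.ext
    rw [homog1_rep p.2, homog1_rep q.2]
    refine Finset.sum_congr rfl fun u _ => ?_
    have := congrFun hpq u
    simp only [homog1Coord, LinearMap.coe_mk, AddHom.coe_mk] at this
    rw [this]
  · intro c
    refine ⟨⟨∑ u : σ, c u • X u, ?_⟩, ?_⟩
    · exact IsHomogeneous.sum _ _ _ fun u _ =>
        (by rw [smul_eq_C_mul]; exact (isHomogeneous_X _ _).C_mul _)
    · funext u
      exact coeff_single_sum c u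

set_option synthInstance.maxHeartbeats 1000000 in
lemma finrank_homog1 :
    Module.finrank K ↥(homogeneousSubmodule σ K 1) = Fintype.card σ := by
  rw [LinearEquiv.finrank_eq
    (LinearEquiv.ofBijective (homog1Coord (K := K) (σ := σ)) homog1Coord_bij)]
  exact Module.finrank_pi K

end Generic

section Main

variable {m : ℕ}

lemma key3 (hm : 6 ≤ m) (x y z : Fin 3) (hxy : x ≠ y) (hxz : x ≠ z) (hyz : y ≠ z)
    (i : ZMod m) {s : MvPolynomial (Fin 3 × ZMod m) K} (hs : s.IsHomogeneous 1) :
    coeff (Finsupp.single (y, i) 1 + Finsupp.single (z, i) 1) (contract s (Fcubic K m)) =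
      coeff (Finsupp.single (x, i) 1) s := by
  classical
  rw [coeff_contract, Finsupp.sum]
  have step : ∀ b ∈ s.support, coeff b s *
      coeff (b + (Finsupp.single (y, i) 1 + Finsupp.single (z, i) 1)) (Fcubic K m) =
      if b = Finsupp.single ((x : Fin 3), i) 1 then coeff b s else 0 := by
    intro b hb
    have hcb : coeff b s ≠ 0 := MvPolynomial.mem_support_iff.mp hb
    by_cases hbx : b = Finsupp.single ((x : Fin 3), i) 1
    · rw [if_pos hbx, coeff_F_mem hm (by
        rw [add_comm]
        exact (classif_yz hm x y z hxy hxz hyz i b).mpr hbx), mul_one]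
    · rw [if_neg hbx, coeff_F_not hm (fun h => hbx
        ((classif_yz hm x y z hxy hxz hyz i b).mp (by rwa [add_comm] at h))), mul_zero]
  refine (Finset.sum_congr rfl step).trans ?_
  rw [Finset.sum_ite_eq' s.support (Finsupp.single ((x : Fin 3), i) 1) (fun b => coeff b s)]
  split_ifs with h
  · rfl
  · exact (MvPolynomial.notMem_support_iff.mp h).symm

lemma part3 (hm : 6 ≤ m) {s : MvPolynomial (Fin 3 × ZMod m) K}
    (hs : s.IsHomogeneous 1) (hs0 : s ≠ 0) : contract s (Fcubic K m) ≠ 0 := by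
  obtain ⟨e, he⟩ := MvPolynomial.ne_zero_iff.mp hs0
  have hdeg : e.degree = 1 := IsHomog.degree_eq hs he
  obtain ⟨⟨x, i⟩, rfl⟩ := single_of_degree_one hdeg
  intro hc
  fin_cases x
  · have h := key3 hm 0 1 2 (by decide) (by decide) (by decide) i hs
    rw [hc, coeff_zero] at h
    exact he h.symm
  · have h := key3 hm 1 0 2 (by decide) (by decide) (by decide) i hs
    rw [hc, coeff_zero] at h
    exact he h.symm
  · have h := key3 hm 2 0 1 (by decide) (by decide) (by decide) i hs
    rw [hc, coeff_zero] at h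
    exact he h.symm

lemma comap_eq (F : MvPolynomial (Fin 3 × ZMod m) K) (i : ℕ) :
    ((annIdeal F).restrictScalars K).comap
        (homogeneousSubmodule (Fin 3 × ZMod m) K i).subtype =
      LinearMap.ker ((contrF F).comp
        (homogeneousSubmodule (Fin 3 × ZMod m) K i).subtype) := by
  ext s
  exact Iff.rfl

lemma hilbQ_rank (F : MvPolynomial (Fin 3 × ZMod m) K) (i : ℕ) :
    hilbQ (annIdeal F) i = Module.finrank K (LinearMap.range ((contrF F).comp
      (homogeneousSubmodule (Fin 3 × ZMod m) K i).subtype)) := by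
  unfold hilbQ
  rw [comap_eq]
  exact LinearEquiv.finrank_eq (LinearMap.quotKerEquivRange _)

lemma range0 (hm : 6 ≤ m) :
    LinearMap.range ((contrF (Fcubic K m)).comp
        (homogeneousSubmodule (Fin 3 × ZMod m) K 0).subtype) =
      Submodule.span K {Fcubic K m} := by
  apply le_antisymm
  · rintro _ ⟨s, rfl⟩
    have hs : (↑s : MvPolynomial (Fin 3 × ZMod m) K).IsHomogeneous 0 := s.2
    show contract (↑s) (Fcubic K m) ∈ _
    rw [eq_C_of_homog0 hs, contract_C]
    exact Submodule.smul_mem _ _ (Submodule.mem_span_singleton_self _)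
  · rw [Submodule.span_singleton_le_iff_mem]
    exact ⟨⟨1, isHomogeneous_one _ _⟩, by
      show contract 1 (Fcubic K m) = Fcubic K m
      rw [← C_1, contract_C, one_smul]⟩

lemma hilb0 (hm : 6 ≤ m) : hilbQ (annIdeal (Fcubic K m)) 0 = 1 := by
  rw [hilbQ_rank, range0 hm]
  exact finrank_span_singleton (F_ne_zero hm)

lemma ker1_bot (hm : 6 ≤ m) :
    LinearMap.ker ((contrF (Fcubic K m)).comp
      (homogeneousSubmodule (Fin 3 × ZMod m) K 1).subtype) = ⊥ := by
  rw [eq_bot_iff]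
  intro s hs
  have hc : contract (↑s) (Fcubic K m) = 0 := hs
  rw [Submodule.mem_bot]
  by_contra h
  exact part3 hm s.2 (fun h0 => h (Subtype.ext h0)) hc

lemma card_sigma [NeZero m] : Fintype.card (Fin 3 × ZMod m) = 3 * m := by
  rw [Fintype.card_prod, ZMod.card, Fintype.card_fin]

lemma hilb1 (hm : 6 ≤ m) : hilbQ (annIdeal (Fcubic K m)) 1 = 3 * m := by
  haveI : NeZero m := ⟨by omega⟩
  unfold hilbQ
  rw [comap_eq, ker1_bot hm]
  rw [(Submodule.quotEquivOfEqBot _ rfl).finrank_eq, finrank_homog1, card_sigma]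

lemma range2 (hm : 6 ≤ m) :
    LinearMap.range ((contrF (Fcubic K m)).comp
        (homogeneousSubmodule (Fin 3 × ZMod m) K 2).subtype) =
      homogeneousSubmodule (Fin 3 × ZMod m) K 1 := by
  haveI : NeZero m := ⟨by omega⟩
  apply le_antisymm
  · rintro _ ⟨s, rfl⟩
    simp only [LinearMap.comp_apply, Submodule.subtype_apply, contrF_apply,
      mem_homogeneousSubmodule]
    simpa using contract_homog s.2 (F_homog hm)
  · intro p hp
    have hp1 : p.IsHomogeneous 1 := hp
    rw [homog1_rep hp1]
    refine Submodule.sum_mem _ fun u _ => Submodule.smul_mem _ _ ?_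
    obtain ⟨x, i⟩ := u
    have hmem : ∀ y z : Fin 3, (X (y, i) * X (z, i) : MvPolynomial (Fin 3 × ZMod m) K) ∈
        homogeneousSubmodule (Fin 3 × ZMod m) K 2 := fun y z => by
      simpa using (isHomogeneous_X _ _).mul (isHomogeneous_X _ _)
    fin_cases x
    · exact ⟨⟨_, hmem 1 2⟩, contract_XX hm 0 1 2 (by decide) (by decide) (by decide) i⟩
    · exact ⟨⟨_, hmem 0 2⟩, contract_XX hm 1 0 2 (by decide) (by decide) (by decide) i⟩
    · exact ⟨⟨_, hmem 0 1⟩, contract_XX hm 2 0 1 (by decide) (by decide) (by decide) i⟩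

lemma hilb2 (hm : 6 ≤ m) : hilbQ (annIdeal (Fcubic K m)) 2 = 3 * m := by
  haveI : NeZero m := ⟨by omega⟩
  rw [hilbQ_rank, range2 hm, finrank_homog1, card_sigma]

lemma range3 (hm : 6 ≤ m) :
    LinearMap.range ((contrF (Fcubic K m)).comp
        (homogeneousSubmodule (Fin 3 × ZMod m) K 3).subtype) =
      Submodule.span K {(1 : MvPolynomial (Fin 3 × ZMod m) K)} := by
  apply le_antisymm
  · rintro _ ⟨s, rfl⟩
    have h0 : (contract (↑s) (Fcubic K m)).IsHomogeneous 0 := by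
      simpa using contract_homog s.2 (F_homog hm)
    show contract (↑s) (Fcubic K m) ∈ _
    rw [eq_C_of_homog0 h0]
    exact Submodule.mem_span_singleton.mpr ⟨_, by rw [smul_eq_C_mul, mul_one]⟩
  · rw [Submodule.span_singleton_le_iff_mem]
    exact ⟨⟨monomial (E0 m 0) 1, isHomogeneous_monomial _ (E0_degree 0)⟩, contract_E0 hm 0⟩

lemma hilb3 (hm : 6 ≤ m) : hilbQ (annIdeal (Fcubic K m)) 3 = 1 := by
  rw [hilbQ_rank, range3 hm]
  exact finrank_span_singleton one_ne_zero

lemma contract_high (hm : 6 ≤ m) {s : MvPolynomial (Fin 3 × ZMod m) K} {i : ℕ}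
    (hi : 3 < i) (hs : s.IsHomogeneous i) : contract s (Fcubic K m) = 0 := by
  ext a
  rw [coeff_contract, Finsupp.sum, coeff_zero]
  refine Finset.sum_eq_zero fun b hb => ?_
  have hcb : coeff b s ≠ 0 := MvPolynomial.mem_support_iff.mp hb
  have hdeg : b.degree = i := IsHomog.degree_eq hs hcb
  have hnot : ¬ PF m (b + a) := by
    intro h
    have h3 := PF_degree h
    rw [degree_add'] at h3
    omega
  show coeff b s * coeff (b + a) (Fcubic K m) = 0
  rw [coeff_F_not hm hnot, mul_zero]

lemma hilb_high (hm : 6 ≤ m) (i : ℕ) (hi : 3 < i) :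
    hilbQ (annIdeal (Fcubic K m)) i = 0 := by
  have htop : ((annIdeal (Fcubic K m)).restrictScalars K).comap
      (homogeneousSubmodule (Fin 3 × ZMod m) K i).subtype = ⊤ := by
    rw [eq_top_iff]
    intro s _
    exact contract_high hm hi s.2
  unfold hilbQ
  rw [htop]
  haveI := Submodule.Quotient.subsingleton_iff.mpr
    (rfl : (⊤ : Submodule K (homogeneousSubmodule (Fin 3 × ZMod m) K i)) = ⊤)
  exact Module.finrank_zero_of_subsingleton

end Main

end LinAlg

theorem Iabc_le_ann_Fcubic_and_hilbert (K : Type*) [Field K] (m : ℕ) (hm : 6 ≤ m) :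
    (∀ s ∈ IabcGens K m, contract s (Fcubic K m) = 0) ∧
    Iabc K m ≤ annIdeal (Fcubic K m) ∧
    (∀ s : MvPolynomial (Fin 3 × ZMod m) K, s.IsHomogeneous 1 → s ≠ 0 →
      contract s (Fcubic K m) ≠ 0) ∧
    hilbQ (annIdeal (Fcubic K m)) 0 = 1 ∧
    hilbQ (annIdeal (Fcubic K m)) 1 = 3 * m ∧
    hilbQ (annIdeal (Fcubic K m)) 2 = 3 * m ∧
    hilbQ (annIdeal (Fcubic K m)) 3 = 1 ∧
    (∀ i : ℕ, 3 < i → hilbQ (annIdeal (Fcubic K m)) i = 0) := by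
  have hgens : ∀ s ∈ IabcGens K m, contract s (Fcubic K m) = 0 := by
    intro s hs
    rcases hs with ((h1 | h2) | h3) | h4
    · obtain ⟨x, y, i, j, hj1, hj2, hj3, rfl⟩ := h1
      exact G1 hm x y i j hj1 hj2 hj3
    · obtain ⟨x, y, i, j, hxy, rfl⟩ := h2
      exact G2 hm x y hxy i j
    · obtain ⟨x, y, z, i, hxy, hxz, hyz, rfl⟩ := h3
      exact G3 hm x y z hxy hxz hyz i
    · obtain ⟨x, y, z, i, hxy, hxz, hyz, rfl⟩ := h4
      exact G4 hm x y z hxy hxz hyz i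
  refine ⟨hgens, ?_, fun s hs hs0 => part3 hm hs hs0, hilb0 hm, hilb1 hm, hilb2 hm,
    hilb3 hm, fun i hi => hilb_high hm i hi⟩
  rw [Iabc, Ideal.span_le]
  intro s hs
  exact mem_annIdeal_iff.mpr (hgens s hs)
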